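/- Let G be a non-abelian finite group with trivial center and let q be the largest prime divisor of |G|. Then |Cent(G)| ≥ q + 2. -/

import Mathlib

open Subgroup

/-- The set of element centralizers of a group `G`. -/
def centSet (G : Type*) [Group G] : Set (Subgroup G) :=
  Set.range fun x : G => Subgroup.centralizer {x}

section Aux

variable {G : Type*} [Group G]

/-- The intersection of the normalizers of all element centralizers. -/
def bigN (G : Type*) [Group G] : Subgroup G :=
  ⨅ y : G, Subgroup.normalizer (Subgroup.centralizer {y} : Set G)

lemma key_rel {u : G} (hu : u ∈ bigN G) (z : G) : Commute z (u * z * u⁻¹) := by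
  have h1 : u ∈ Subgroup.normalizer (Subgroup.centralizer {z} : Set G) := Subgroup.mem_iInf.mp hu z
  have h2 : z ∈ Subgroup.centralizer {z} := Subgroup.mem_centralizer_iff.mpr (by simp)
  have h3 : u * z * u⁻¹ ∈ Subgroup.centralizer {z} :=
    (Subgroup.mem_normalizer_iff.mp h1 z).mp h2
  exact Subgroup.mem_centralizer_iff.mp h3 z (by simp)

lemma conj_cent_iff (h y z : G) :
    z ∈ Subgroup.centralizer {y} ↔ h⁻¹ * z * h ∈ Subgroup.centralizer {h⁻¹ * y * h} := by
  simp only [Subgroup.mem_centralizer_iff, Set.mem_singleton_iff, forall_eq]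
  constructor
  · intro hc
    calc h⁻¹ * y * h * (h⁻¹ * z * h) = h⁻¹ * (y * z) * h := by group
    _ = h⁻¹ * (z * y) * h := by rw [hc]
    _ = h⁻¹ * z * h * (h⁻¹ * y * h) := by group
  · intro hc
    have h2 : h * (h⁻¹ * y * h * (h⁻¹ * z * h)) * h⁻¹
        = h * (h⁻¹ * z * h * (h⁻¹ * y * h)) * h⁻¹ := by rw [hc]
    calc y * z = h * (h⁻¹ * y * h * (h⁻¹ * z * h)) * h⁻¹ := by group
    _ = h * (h⁻¹ * z * h * (h⁻¹ * y * h)) * h⁻¹ := h2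
    _ = z * y := by group

lemma centralizer_one_top : Subgroup.centralizer ({1} : Set G) = ⊤ := by
  ext z; simp [Subgroup.mem_centralizer_iff]

lemma bigN_normal : (bigN G).Normal := by
  constructor
  intro n hn h
  rw [bigN, Subgroup.mem_iInf]
  intro y
  rw [Subgroup.mem_normalizer_iff]
  intro g
  have hn' := Subgroup.mem_iInf.mp hn (h⁻¹ * y * h)
  have base := Subgroup.mem_normalizer_iff.mp hn' (h⁻¹ * g * h)
  have e1 := conj_cent_iff h y g
  have e2 := conj_cent_iff h⁻¹ (h⁻¹ * y * h) (n * (h⁻¹ * g * h) * n⁻¹)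
  simp only [inv_inv] at e2
  have hy' : h * (h⁻¹ * y * h) * h⁻¹ = y := by group
  rw [hy'] at e2
  have hexp : h * (n * (h⁻¹ * g * h) * n⁻¹) * h⁻¹ = h * n * h⁻¹ * g * (h * n * h⁻¹)⁻¹ := by
    group
  rw [hexp] at e2
  rw [e1, base, e2]

variable [Finite G]

/-- The contradiction in the "bad case": an element of prime order normalizing
every element centralizer in a finite group with trivial center. -/
lemma badcase (hZ : Subgroup.center G = ⊥) (p : ℕ) (hp : p.Prime) (x : G)
    (hx : orderOf x = p) (hxN : x ∈ bigN G) : False := by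
  classical
  haveI : Fact p.Prime := ⟨hp⟩
  have hx1 : x ≠ 1 := by
    intro h
    rw [h, orderOf_one] at hx
    exact hp.one_lt.ne' hx.symm
  set Sc : G → Set G := fun c => {w | ∃ u ∈ bigN G, w = u * c * u⁻¹} with hSc
  set f : G → Subgroup G := fun g => Subgroup.closure (Sc (g * x * g⁻¹)) with hf
  have hconjN : ∀ g : G, g * x * g⁻¹ ∈ bigN G := fun g => bigN_normal.conj_mem x hxN g
  have gencomm : ∀ c : G, ∀ s ∈ Sc c, ∀ t ∈ Sc c, Commute s t := by
    rintro c s ⟨u, hu, rfl⟩ t ⟨v, hv, rfl⟩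
    have base : Commute c ((u⁻¹ * v) * c * (u⁻¹ * v)⁻¹) :=
      key_rel (mul_mem (inv_mem hu) hv) c
    have hmap := base.map (MulAut.conj u).toMonoidHom
    simp only [MulEquiv.coe_toMonoidHom, MulAut.conj_apply] at hmap
    have e : u * ((u⁻¹ * v) * c * (u⁻¹ * v)⁻¹) * u⁻¹ = v * c * v⁻¹ := by group
    rwa [e] at hmap
  have hcomm : ∀ c : G, ∀ a ∈ Subgroup.closure (Sc c), ∀ b ∈ Subgroup.closure (Sc c),
      Commute a b := by
    intro c a ha b hb
    have comm1 : ∀ s ∈ Sc c, Commute s b := by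
      intro s hs
      refine Subgroup.closure_induction (fun t ht => gencomm c s hs t ht)
        (Commute.one_right s) (fun a' b' _ _ h1 h2 => h1.mul_right h2)
        (fun a' _ h1 => h1.inv_right) hb
    refine Subgroup.closure_induction (fun s hs => comm1 s hs)
      (Commute.one_left b) (fun a' b' _ _ h1 h2 => h1.mul_left h2)
      (fun a' _ h1 => h1.inv_left) ha
  have hpow : ∀ g : G, ∀ a ∈ f g, a ^ p = 1 := by
    intro g a ha
    have genpow : ∀ s ∈ Sc (g * x * g⁻¹), s ^ p = 1 := by
      rintro s ⟨u, hu, rfl⟩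
      have e1 : orderOf (u * (g * x * g⁻¹) * u⁻¹) = orderOf x := by
        have h2 := MulEquiv.orderOf_eq (MulAut.conj (u * g)) x
        simp only [MulAut.conj_apply] at h2
        rw [← h2]
        congr 1
        group
      rw [← hx, ← e1]
      exact pow_orderOf_eq_one _
    refine Subgroup.closure_induction genpow (one_pow p) ?_ ?_ ha
    · intro a' b' ha' hb' h1 h2
      rw [(hcomm (g * x * g⁻¹) a' ha' b' hb').mul_pow, h1, h2, one_mul]
    · intro a' _ h1
      rw [inv_pow, h1, inv_one]
  have hfp : ∀ g : G, IsPGroup p (f g) := by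
    intro g a
    exact ⟨1, by
      rw [pow_one]
      exact Subtype.ext (by simpa using hpow g a.1 a.2)⟩
  have hfN : ∀ g : G, f g ≤ bigN G := by
    intro g
    rw [hf]
    refine (Subgroup.closure_le _).mpr ?_
    rintro w ⟨u, hu, rfl⟩
    exact mul_mem (mul_mem hu (hconjN g)) (inv_mem hu)
  have hfstab : ∀ u ∈ bigN G, ∀ g : G, ∀ a ∈ f g, u * a * u⁻¹ ∈ f g := by
    intro u hu g a ha
    refine Subgroup.closure_induction (p := fun a _ => u * a * u⁻¹ ∈ f g) ?_ ?_ ?_ ?_ ha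
    · rintro w ⟨v, hv, rfl⟩
      refine Subgroup.subset_closure ⟨u * v, mul_mem hu hv, ?_⟩
      group
    · simpa using one_mem (f g)
    · intro a' b' _ _ h1 h2
      have e : u * (a' * b') * u⁻¹ = (u * a' * u⁻¹) * (u * b' * u⁻¹) := by group
      rw [e]; exact mul_mem h1 h2
    · intro a' _ h1
      have e : u * a'⁻¹ * u⁻¹ = (u * a' * u⁻¹)⁻¹ := by group
      rw [e]; exact inv_mem h1
  have hfconj : ∀ h g : G, ∀ a ∈ f g, h * a * h⁻¹ ∈ f (h * g) := by
    intro h g a ha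
    refine Subgroup.closure_induction (p := fun a _ => h * a * h⁻¹ ∈ f (h * g)) ?_ ?_ ?_ ?_ ha
    · rintro w ⟨v, hv, rfl⟩
      refine Subgroup.subset_closure ⟨h * v * h⁻¹, bigN_normal.conj_mem v hv h, ?_⟩
      group
    · simpa using one_mem (f (h * g))
    · intro a' b' _ _ h1 h2
      have e : h * (a' * b') * h⁻¹ = (h * a' * h⁻¹) * (h * b' * h⁻¹) := by group
      rw [e]; exact mul_mem h1 h2
    · intro a' _ h1
      have e : h * a'⁻¹ * h⁻¹ = (h * a' * h⁻¹)⁻¹ := by group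
      rw [e]; exact inv_mem h1
  haveI := Fintype.ofFinite G
  set A : Subgroup G := Finset.univ.sup f with hA
  have hmain : ∀ s : Finset G, IsPGroup p ↥(s.sup f) ∧ s.sup f ≤ bigN G ∧
      (∀ u ∈ bigN G, ∀ a ∈ s.sup f, u * a * u⁻¹ ∈ s.sup f) := by
    intro s
    induction s using Finset.cons_induction with
    | empty =>
      refine ⟨?_, by simp, ?_⟩
      · intro a
        refine ⟨0, ?_⟩
        have ha := a.2
        simp only [Finset.sup_empty, Subgroup.mem_bot] at ha
        simpa [pow_one] using Subtype.ext ha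
      · intro u hu a ha
        simp only [Finset.sup_empty, Subgroup.mem_bot] at ha ⊢
        simp [ha]
    | cons g s hgs ih =>
      obtain ⟨ih1, ih2, ih3⟩ := ih
      have hnorm : f g ≤ Subgroup.normalizer ((s.sup f : Subgroup G) : Set G) := by
        refine le_trans (hfN g) ?_
        intro u hu
        rw [Subgroup.mem_normalizer_iff]
        intro b
        constructor
        · intro hb; exact ih3 u hu b hb
        · intro hb
          have h2 := ih3 u⁻¹ (inv_mem hu) _ hb
          have e : u⁻¹ * (u * b * u⁻¹) * u⁻¹⁻¹ = b := by group
          rwa [e] at h2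
      refine ⟨?_, ?_, ?_⟩
      · rw [Finset.sup_cons]
        exact IsPGroup.to_sup_of_normal_right' (hfp g) ih1 hnorm
      · rw [Finset.sup_cons]
        exact sup_le (hfN g) ih2
      · intro u hu a ha
        rw [Finset.sup_cons] at ha ⊢
        set φ := (MulAut.conj u).toMonoidHom with hφ
        have hmapf : Subgroup.map φ (f g) ≤ f g := by
          rw [Subgroup.map_le_iff_le_comap]
          intro b hb
          rw [Subgroup.mem_comap]
          simpa [hφ, MulAut.conj_apply] using hfstab u hu g b hb
        have hmaps : Subgroup.map φ (s.sup f) ≤ s.sup f := by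
          rw [Subgroup.map_le_iff_le_comap]
          intro b hb
          rw [Subgroup.mem_comap]
          simpa [hφ, MulAut.conj_apply] using ih3 u hu b hb
        have h1 : φ a ∈ Subgroup.map φ (f g ⊔ s.sup f) := ⟨a, ha, rfl⟩
        rw [Subgroup.map_sup] at h1
        have h3 := (sup_le_sup hmapf hmaps) h1
        simpa [hφ, MulAut.conj_apply] using h3
  have hApgroup : IsPGroup p A := (hmain Finset.univ).1
  have hAN : A ≤ bigN G := (hmain Finset.univ).2.1
  have hxA : x ∈ A := by
    have h1 : f 1 ≤ A := Finset.le_sup (Finset.mem_univ 1)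
    refine h1 ?_
    refine Subgroup.subset_closure ⟨1, one_mem _, ?_⟩
    group
  have hAconj : ∀ a ∈ A, ∀ h : G, h * a * h⁻¹ ∈ A := by
    intro a ha h
    rw [hA] at ha ⊢
    have hgen : ∀ s : Finset G, ∀ a ∈ s.sup f, h * a * h⁻¹ ∈ Finset.univ.sup f := by
      intro s
      induction s using Finset.cons_induction with
      | empty =>
        intro a ha'
        simp only [Finset.sup_empty, Subgroup.mem_bot] at ha'
        subst ha'
        simpa using one_mem (Finset.univ.sup f)
      | cons g s hgs ih =>
        intro a ha'
        rw [Finset.sup_cons] at ha'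
        set φ := (MulAut.conj h).toMonoidHom with hφ
        have h1 : Subgroup.map φ (f g) ≤ Finset.univ.sup f := by
          rw [Subgroup.map_le_iff_le_comap]
          intro b hb
          rw [Subgroup.mem_comap]
          have h2 : f (h * g) ≤ Finset.univ.sup f := Finset.le_sup (Finset.mem_univ _)
          simpa [hφ, MulAut.conj_apply] using h2 (hfconj h g b hb)
        have h2 : Subgroup.map φ (s.sup f) ≤ Finset.univ.sup f := by
          rw [Subgroup.map_le_iff_le_comap]
          intro b hb
          rw [Subgroup.mem_comap]
          simpa [hφ, MulAut.conj_apply] using ih b hb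
        have h3 : φ a ∈ Subgroup.map φ (f g ⊔ s.sup f) := ⟨a, ha', rfl⟩
        rw [Subgroup.map_sup] at h3
        have h4 := (sup_le h1 h2) h3
        simpa [hφ, MulAut.conj_apply] using h4
    exact hgen Finset.univ a ha
  have hp' : ∀ y : G, Nat.Coprime (orderOf y) p → ∀ a ∈ A, Commute a y := by
    intro y hcop a ha
    have hyy : Commute y (a * y * a⁻¹) := key_rel (hAN ha) y
    set w : G := y⁻¹ * (a * y * a⁻¹) with hw
    have hyw : Commute y w := ((Commute.refl y).inv_right).mul_right hyy
    have hwA : w ∈ A := by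
      have h1 : y⁻¹ * a * y ∈ A := by
        have h2 := hAconj a ha y⁻¹
        simpa using h2
      have e : w = (y⁻¹ * a * y) * a⁻¹ := by rw [hw]; group
      rw [e]
      exact mul_mem h1 (inv_mem ha)
    have hyweq : y * w = a * y * a⁻¹ := by rw [hw]; group
    have hordeq : orderOf (a * y * a⁻¹) = orderOf y := by
      have h2 := MulEquiv.orderOf_eq (MulAut.conj a) y
      simpa [MulAut.conj_apply] using h2
    have hwm : w ^ orderOf y = 1 := by
      have h2 : (y * w) ^ orderOf y = y ^ orderOf y * w ^ orderOf y := hyw.mul_pow _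
      rw [hyweq] at h2
      have h3 : (a * y * a⁻¹) ^ orderOf y = 1 := by
        rw [← hordeq]; exact pow_orderOf_eq_one _
      rw [h3, pow_orderOf_eq_one, one_mul] at h2
      exact h2.symm
    obtain ⟨n, hn⟩ := hApgroup ⟨w, hwA⟩
    have hwp : w ^ p ^ n = 1 := by
      have h2 := congrArg (Subgroup.subtype A) hn
      simpa using h2
    have hd1 : orderOf w ∣ p ^ n := orderOf_dvd_of_pow_eq_one hwp
    have hd2 : orderOf w ∣ orderOf y := orderOf_dvd_of_pow_eq_one hwm
    have hcop2 : Nat.Coprime (orderOf y) (p ^ n) := hcop.pow_right n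
    have hdd : orderOf w ∣ 1 := by
      have h2 := Nat.dvd_gcd hd2 hd1
      rwa [Nat.Coprime.gcd_eq_one hcop2] at h2
    have hw1 : w = 1 := orderOf_eq_one_iff.mp (Nat.dvd_one.mp hdd)
    have hfix : a * y * a⁻¹ = y := by rw [← hyweq, hw1, mul_one]
    calc a * y = (a * y * a⁻¹) * a := by group
    _ = y * a := by rw [hfix]
  haveI : Finite (Sylow p G) :=
    Finite.of_injective (fun P : Sylow p G => (P : Subgroup G)) (fun P Q h => Sylow.ext h)
  obtain ⟨P⟩ : Nonempty (Sylow p G) := inferInstance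
  letI act : MulAction ↥(P : Subgroup G) ↥A :=
    { smul := fun g a => ⟨(g : G) * a * (g : G)⁻¹, hAconj a a.2 g⟩
      one_smul := fun a => by
        apply Subtype.ext
        show ((1 : ↥(P : Subgroup G)) : G) * a * ((1 : ↥(P : Subgroup G)) : G)⁻¹ = a
        simp
      mul_smul := fun g h a => by
        apply Subtype.ext
        show ((g * h : ↥(P : Subgroup G)) : G) * a * ((g * h : ↥(P : Subgroup G)) : G)⁻¹ =
          (g : G) * ((h : G) * a * (h : G)⁻¹) * (g : G)⁻¹
        push_cast
        group }
  have hmod := (P.2).card_modEq_card_fixedPoints (↥A)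
  have hdvdA : p ∣ Nat.card ↥A := by
    have h1 : orderOf (⟨x, hxA⟩ : ↥A) = orderOf x := by
      simpa using (orderOf_injective A.subtype Subtype.coe_injective ⟨x, hxA⟩).symm
    have h2 : orderOf (⟨x, hxA⟩ : ↥A) = p := by rw [h1, hx]
    rw [← h2]
    exact orderOf_dvd_natCard _
  have hdvdFix : p ∣ Nat.card (MulAction.fixedPoints ↥(P : Subgroup G) ↥A) := by
    have h2 := (Nat.modEq_zero_iff_dvd.mpr hdvdA).symm.trans hmod
    exact Nat.modEq_zero_iff_dvd.mp h2.symm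
  have hone_fix : (1 : ↥A) ∈ MulAction.fixedPoints ↥(P : Subgroup G) ↥A := by
    intro g
    apply Subtype.ext
    show (g : G) * ((1 : ↥A) : G) * (g : G)⁻¹ = ((1 : ↥A) : G)
    simp
  haveI : Nonempty ↥(MulAction.fixedPoints ↥(P : Subgroup G) ↥A) := ⟨⟨1, hone_fix⟩⟩
  have hcardpos : 0 < Nat.card ↥(MulAction.fixedPoints ↥(P : Subgroup G) ↥A) := Nat.card_pos
  have h2le : 2 ≤ Nat.card ↥(MulAction.fixedPoints ↥(P : Subgroup G) ↥A) :=
    le_trans hp.two_le (Nat.le_of_dvd hcardpos hdvdFix)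
  haveI : Nontrivial ↥(MulAction.fixedPoints ↥(P : Subgroup G) ↥A) :=
    Finite.one_lt_card_iff_nontrivial.mp h2le
  obtain ⟨⟨a, hafix⟩, hane⟩ := exists_ne
    (⟨1, hone_fix⟩ : ↥(MulAction.fixedPoints ↥(P : Subgroup G) ↥A))
  have ha1 : a ≠ 1 := fun h => hane (by subst h; rfl)
  have haG1 : (a : G) ≠ 1 := fun h => ha1 (Subtype.ext h)
  set Ca : Subgroup G := Subgroup.centralizer {(a : G)} with hCa
  have hPle : (P : Subgroup G) ≤ Ca := by
    intro g hg
    rw [hCa, Subgroup.mem_centralizer_iff]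
    intro h hh
    rw [Set.mem_singleton_iff] at hh
    subst hh
    have h1 := hafix ⟨g, hg⟩
    have h2 : g * (a : G) * g⁻¹ = (a : G) := congrArg Subtype.val h1
    calc (a : G) * g = (g * (a : G) * g⁻¹) * g := by rw [h2]
    _ = g * (a : G) := by group
  have hrle : ∀ r : ℕ, r.Prime → r ≠ p → ∀ Q : Sylow r G, (Q : Subgroup G) ≤ Ca := by
    intro r hr hrp Q g hg
    have hcop : Nat.Coprime (orderOf g) p := by
      obtain ⟨n, hn⟩ := Q.2 ⟨g, hg⟩
      have hgp : g ^ r ^ n = 1 := by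
        have h2 := congrArg (Subgroup.subtype (Q : Subgroup G)) hn
        simpa using h2
      have hd : orderOf g ∣ r ^ n := orderOf_dvd_of_pow_eq_one hgp
      have h3 : Nat.Coprime (r ^ n) p := ((Nat.coprime_primes hr hp).mpr hrp).pow_left n
      exact Nat.Coprime.coprime_dvd_left hd h3
    have h4 := hp' g hcop (a : G) a.2
    rw [hCa, Subgroup.mem_centralizer_iff]
    intro h hh
    rw [Set.mem_singleton_iff] at hh
    subst hh
    exact h4
  have hCtop : Ca = ⊤ := by
    by_contra hne
    have h1 : Ca.index ≠ 1 := fun h => hne (Subgroup.index_eq_one.mp h)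
    obtain ⟨r, hr, hrdvd⟩ := Nat.exists_prime_and_dvd h1
    rcases eq_or_ne r p with rfl | hrp
    · have hdvd2 : Ca.index ∣ (P : Subgroup G).index := Subgroup.index_dvd_of_le hPle
      exact P.not_dvd_index (hrdvd.trans hdvd2)
    · haveI : Fact r.Prime := ⟨hr⟩
      haveI : Finite (Sylow r G) :=
        Finite.of_injective (fun Q : Sylow r G => (Q : Subgroup G)) (fun Q Q' h => Sylow.ext h)
      obtain ⟨Q⟩ : Nonempty (Sylow r G) := inferInstance
      have hdvd2 : Ca.index ∣ (Q : Subgroup G).index :=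
        Subgroup.index_dvd_of_le (hrle r hr hrp Q)
      exact Q.not_dvd_index (hrdvd.trans hdvd2)
  have hacen : (a : G) ∈ Subgroup.center G := by
    rw [Subgroup.mem_center_iff]
    intro g
    have hg : g ∈ Ca := hCtop ▸ Subgroup.mem_top g
    rw [hCa, Subgroup.mem_centralizer_iff] at hg
    exact (hg (a : G) (by simp)).symm
  rw [hZ, Subgroup.mem_bot] at hacen
  exact haG1 hacen

end Aux

/-- A non-abelian finite group with trivial center whose largest prime divisor is `q`
has at least `q + 2` element centralizers. -/
theorem stmt14 (G : Type*) [Group G] [Finite G]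
    (hG : ¬∀ a b : G, a * b = b * a)
    (hZ : Subgroup.center G = ⊥) (q : ℕ) (hq : q.Prime)
    (hdvd : q ∣ Nat.card G)
    (hmax : ∀ r : ℕ, r.Prime → r ∣ Nat.card G → r ≤ q) :
    q + 2 ≤ (centSet G).ncard := by
  classical
  haveI : Fact q.Prime := ⟨hq⟩
  obtain ⟨x, hx⟩ := exists_prime_orderOf_dvd_card' q hdvd
  have hx1 : x ≠ 1 := by
    intro h
    rw [h, orderOf_one] at hx
    exact hq.one_lt.ne' hx.symm
  have hxN : x ∉ bigN G := fun h => badcase hZ q hq x hx h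
  rw [bigN, Subgroup.mem_iInf] at hxN
  push_neg at hxN
  obtain ⟨y, hy⟩ := hxN
  set D : Subgroup G := Subgroup.centralizer {y} with hD
  have hpow_norm : ∀ d : ℕ, 0 < d → d < q → x ^ d ∈ Subgroup.normalizer (D : Set G) → False := by
    intro d hd0 hdq hmem
    have hcop : d.Coprime (orderOf x) := by
      rw [hx]
      exact Nat.coprime_comm.mp (hq.coprime_iff_not_dvd.mpr (Nat.not_dvd_of_pos_of_lt hd0 hdq))
    obtain ⟨m, hm⟩ := exists_pow_eq_self_of_coprime hcop
    exact hy (hm ▸ pow_mem hmem m)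
  set E : ℕ → Subgroup G := fun i => Subgroup.centralizer {x ^ i * y * (x ^ i)⁻¹} with hE
  have hEmem : ∀ i : ℕ, ∀ z : G, z ∈ E i ↔ (x ^ i)⁻¹ * z * x ^ i ∈ D := by
    intro i z
    have h1 := conj_cent_iff (x ^ i) (x ^ i * y * (x ^ i)⁻¹) z
    have e : (x ^ i)⁻¹ * (x ^ i * y * (x ^ i)⁻¹) * x ^ i = y := by group
    rw [e] at h1
    exact h1
  have hxselfE : ∀ i : ℕ, x ∈ E i ↔ x ∈ D := by
    intro i
    rw [hEmem i x]
    have e : (x ^ i)⁻¹ * x * x ^ i = x := by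
      have hc : x * x ^ i = x ^ i * x := ((Commute.refl x).pow_right i).eq
      rw [mul_assoc, hc, ← mul_assoc, inv_mul_cancel, one_mul]
    rw [e]
  have hdistinct : ∀ i j : ℕ, i < j → j < q → E i ≠ E j := by
    intro i j hij hjq heq
    set d := j - i with hd
    have hd0 : 0 < d := Nat.sub_pos_of_lt hij
    have hdq : d < q := lt_of_le_of_lt (Nat.sub_le j i) hjq
    apply hpow_norm d hd0 hdq
    rw [Subgroup.mem_normalizer_iff]
    intro h
    have hji : j = i + d := by omega
    have h1 := hEmem j (x ^ j * h * (x ^ j)⁻¹)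
    have h2 := hEmem i (x ^ j * h * (x ^ j)⁻¹)
    rw [heq] at h2
    have e1 : (x ^ j)⁻¹ * (x ^ j * h * (x ^ j)⁻¹) * x ^ j = h := by group
    have e2 : (x ^ i)⁻¹ * (x ^ j * h * (x ^ j)⁻¹) * x ^ i = x ^ d * h * (x ^ d)⁻¹ := by
      rw [hji, pow_add]
      group
    rw [e1] at h1
    rw [e2] at h2
    exact h1.symm.trans h2
  have hEne_top : ∀ i : ℕ, E i ≠ ⊤ := by
    intro i htop
    have hyc : x ^ i * y * (x ^ i)⁻¹ ∈ Subgroup.center G := by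
      rw [Subgroup.mem_center_iff]
      intro g
      have hg : g ∈ E i := htop ▸ Subgroup.mem_top g
      exact (Subgroup.mem_centralizer_iff.mp hg _ (by simp)).symm
    rw [hZ, Subgroup.mem_bot] at hyc
    have hy1 : y = 1 := by
      have h2 := congrArg (fun w => (x ^ i)⁻¹ * w * x ^ i) hyc
      calc y = (x ^ i)⁻¹ * (x ^ i * y * (x ^ i)⁻¹) * x ^ i := by group
      _ = (x ^ i)⁻¹ * 1 * x ^ i := h2
      _ = 1 := by group
    apply hy
    rw [hD, hy1, centralizer_one_top]
    rw [Subgroup.mem_normalizer_iff]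
    intro g
    simp
  have hEne_Cx : ∀ i : ℕ, E i ≠ Subgroup.centralizer {x} := by
    intro i heq
    have hxE : x ∈ E i := by
      rw [heq]
      exact Subgroup.mem_centralizer_iff.mpr (by simp)
    have hxD : x ∈ D := (hxselfE i).mp hxE
    exact hy (Subgroup.le_normalizer hxD)
  have hCx_ne_top : Subgroup.centralizer {x} ≠ ⊤ := by
    intro htop
    have hxc : x ∈ Subgroup.center G := by
      rw [Subgroup.mem_center_iff]
      intro g
      have hg : g ∈ Subgroup.centralizer {x} := htop ▸ Subgroup.mem_top g
      exact (Subgroup.mem_centralizer_iff.mp hg _ (by simp)).symm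
    rw [hZ, Subgroup.mem_bot] at hxc
    exact hx1 hxc
  set S1 : Set (Subgroup G) := E '' ↑(Finset.range q) with hS1
  set S2 : Set (Subgroup G) := {⊤, Subgroup.centralizer {x}} with hS2
  have hS1cent : S1 ⊆ centSet G := by
    rintro s ⟨i, hi, rfl⟩
    exact ⟨x ^ i * y * (x ^ i)⁻¹, rfl⟩
  have hS2cent : S2 ⊆ centSet G := by
    rintro s hs
    rw [hS2, Set.mem_insert_iff, Set.mem_singleton_iff] at hs
    rcases hs with rfl | rfl
    · exact ⟨1, centralizer_one_top⟩
    · exact ⟨x, rfl⟩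
  have hinj : Set.InjOn E ↑(Finset.range q) := by
    intro i hi j hj heq
    simp only [Finset.coe_range, Set.mem_Iio] at hi hj
    by_contra hne
    rcases Nat.lt_or_ge i j with h | h
    · exact hdistinct i j h hj heq
    · exact hdistinct j i (lt_of_le_of_ne h (Ne.symm hne)) hi heq.symm
  have hcard1 : S1.ncard = q := by
    rw [hS1, Set.ncard_image_of_injOn hinj, Set.ncard_coe_finset, Finset.card_range]
  have hTne : (⊤ : Subgroup G) ≠ Subgroup.centralizer {x} := fun h => hCx_ne_top h.symm
  have hcard2 : S2.ncard = 2 := Set.ncard_pair hTne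
  have hdisj : Disjoint S1 S2 := by
    rw [Set.disjoint_left]
    rintro s ⟨i, hi, rfl⟩ hs2
    rw [hS2, Set.mem_insert_iff, Set.mem_singleton_iff] at hs2
    rcases hs2 with h | h
    · exact hEne_top i h
    · exact hEne_Cx i h
  have hfin1 : S1.Finite := ((Finset.range q : Finset ℕ) : Set ℕ).toFinite.image E
  have hfin2 : S2.Finite := (Set.finite_singleton _).insert _
  have hunion : (S1 ∪ S2).ncard = q + 2 := by
    rw [Set.ncard_union_eq hdisj hfin1 hfin2, hcard1, hcard2]
  calc q + 2 = (S1 ∪ S2).ncard := hunion.symm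
  _ ≤ (centSet G).ncard :=
    Set.ncard_le_ncard (Set.union_subset hS1cent hS2cent) (Set.finite_range _)
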